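/- Let (X₁, X₂) be a convexly separable pair of finite subsets of ℝ^d. Then there exists a max-affine function h : ℝ^d → ℝ such that h(x) > 0 for all x ∈ X₁ and h(x) ≤ 0 for all x ∈ X₂. -/

import Mathlib

/-- An ordered pair `(X₁, X₂)` of subsets of ℝ^d is *convexly separable* if there exists a
nonempty closed convex set `X ⊆ ℝ^d` such that `X₂ ⊆ X` and `X₁ ⊆ ℝ^d \ X`. -/
def ConvexlySeparable {d : ℕ} (X₁ X₂ : Set (EuclideanSpace ℝ (Fin d))) : Prop :=
  ∃ X : Set (EuclideanSpace ℝ (Fin d)),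
    X.Nonempty ∧ IsClosed X ∧ Convex ℝ X ∧ X₂ ⊆ X ∧ X₁ ⊆ Xᶜ

/-- A *max-affine* function on ℝ^d: `h x = max_{i ∈ I} (⟪aᵢ, x⟫ + bᵢ)` for a nonempty finite
index set; such functions are exactly those realized by input-convex ReLU neural networks. -/
def MaxAffine {d : ℕ} (h : EuclideanSpace ℝ (Fin d) → ℝ) : Prop :=
  ∃ (n : ℕ) (a : Fin (n + 1) → EuclideanSpace ℝ (Fin d)) (b : Fin (n + 1) → ℝ),
    ∀ x, h x = Finset.univ.sup' Finset.univ_nonempty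
      (fun i : Fin (n + 1) => (inner ℝ (a i) x : ℝ) + b i)

/-- **Theorem 3 of the paper**: a convexly separable pair of finite subsets of ℝ^d can be
perfectly fit by a max-affine classifier (equivalently an input-convex ReLU network). -/
theorem maxAffine_fits_convexly_separable_finite {d : ℕ}
    (X₁ X₂ : Set (EuclideanSpace ℝ (Fin d))) (hX₁ : X₁.Finite) (hX₂ : X₂.Finite)
    (hsep : ConvexlySeparable X₁ X₂) :
    ∃ h : EuclideanSpace ℝ (Fin d) → ℝ, MaxAffine h ∧
      (∀ x ∈ X₁, 0 < h x) ∧ (∀ x ∈ X₂, h x ≤ 0) := by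
  obtain ⟨X, -, hXcl, hXconv, hX₂X, hX₁X⟩ := hsep
  rcases X₁.eq_empty_or_nonempty with h1 | h1
  · refine ⟨fun _ => -1, ⟨0, fun _ => 0, fun _ => -1, fun x => ?_⟩, ?_, ?_⟩
    · simp
    · simp [h1]
    · intro x _; norm_num
  · -- enumerate X₁
    set s := hX₁.toFinset with hs
    have hsne : s.Nonempty := by
      rwa [hs, Set.Finite.toFinset_nonempty]
    obtain ⟨n, hn⟩ : ∃ n, s.card = n + 1 :=
      ⟨s.card - 1, (Nat.succ_pred_eq_of_pos (Finset.card_pos.mpr hsne)).symm⟩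
    let e : Fin (n + 1) → EuclideanSpace ℝ (Fin d) := fun i =>
      (s.equivFin.symm (Fin.cast hn.symm i) : _)
    have he : ∀ i, e i ∈ X₁ := fun i => by
      have := (s.equivFin.symm (Fin.cast hn.symm i)).2
      exact hX₁.mem_toFinset.mp this
    have he' : ∀ x ∈ X₁, ∃ i, e i = x := by
      intro x hx
      have hxs : x ∈ s := by rwa [hs, Set.Finite.mem_toFinset]
      refine ⟨Fin.cast hn (s.equivFin ⟨x, hxs⟩), ?_⟩
      simp [e]
    -- separate each point
    have hsep : ∀ i : Fin (n + 1),
        ∃ (a : EuclideanSpace ℝ (Fin d)) (b : ℝ),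
          (∀ y ∈ X, (inner ℝ a y : ℝ) + b < 0) ∧ 0 < (inner ℝ a (e i) : ℝ) + b := by
      intro i
      have hni : e i ∉ X := hX₁X (he i)
      obtain ⟨f, u, hfX, hfx⟩ := geometric_hahn_banach_closed_point hXconv hXcl hni
      refine ⟨(InnerProductSpace.toDual ℝ _).symm f, -u, ?_, ?_⟩
      · intro y hy
        have := hfX y hy
        simpa [InnerProductSpace.toDual_symm_apply] using sub_neg.mpr this
      · simpa [InnerProductSpace.toDual_symm_apply] using sub_pos.mpr hfx
    choose a b hb hb' using hsep
    refine ⟨fun x => Finset.univ.sup' Finset.univ_nonempty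
        (fun i : Fin (n + 1) => (inner ℝ (a i) x : ℝ) + b i),
      ⟨n, a, b, fun _ => rfl⟩, ?_, ?_⟩
    · intro x hx
      obtain ⟨i, hi⟩ := he' x hx
      calc (0:ℝ) < (inner ℝ (a i) x : ℝ) + b i := hi ▸ hb' i
        _ ≤ _ := Finset.le_sup' (fun i => (inner ℝ (a i) x : ℝ) + b i) (Finset.mem_univ i)
    · intro x hx
      exact Finset.sup'_le _ _ fun i _ => (hb i x (hX₂X hx)).le
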